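/- Assume λ > 0, 0 < ξ < π(λ+1)/2 and ξ/π − 1/2 ∉ ℤ. Then the number of integers n ≥ 0 with ν_n > 0 equals ⌊ξ/π − 1/2⌋ + 1 (interpreted as 0 when ξ < π/2), and every n with ν_n > 0 also satisfies ν_n < π/2; hence ⌊ξ/π − 1/2⌋ + 1 is exactly the number of ν-type poles lying in the physical strip (0, π/2). -/

import Mathlib

open Real

/-- The candidate soliton boundary-binding rapidity `ν_n = ξ/λ − (2n+1)π/(2λ)`. -/
noncomputable def nuP (lam ξ : ℝ) (n : ℕ) : ℝ :=
  ξ / lam - (2 * (n : ℝ) + 1) * Real.pi / (2 * lam)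

/-- For `λ > 0`, `0 < ξ < π(λ+1)/2` and `ξ/π − 1/2 ∉ ℤ`, the number of integers `n ≥ 0`
with `ν_n > 0` equals `⌊ξ/π − 1/2⌋ + 1` (which is `0` when `ξ < π/2`), and every `n` with
`ν_n > 0` also satisfies `ν_n < π/2`; so `⌊ξ/π − 1/2⌋ + 1` is exactly the number of
`ν`-type poles in the physical strip `(0, π/2)`. -/
theorem stmt9 (lam ξ : ℝ) (hlam : 0 < lam) (hxi0 : 0 < ξ)
    (hxi1 : ξ < Real.pi * (lam + 1) / 2) (hni : ∀ z : ℤ, ξ / Real.pi - 1 / 2 ≠ (z : ℝ)) :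
    ((Set.ncard {n : ℕ | 0 < nuP lam ξ n} : ℤ) = ⌊ξ / Real.pi - 1 / 2⌋ + 1) ∧
    (∀ n : ℕ, 0 < nuP lam ξ n → nuP lam ξ n < Real.pi / 2) := by
  have pi_pos := Real.pi_pos
  set f : ℝ := ξ / Real.pi - 1 / 2 with hf
  have key : ∀ n : ℕ, 0 < nuP lam ξ n ↔ (n : ℝ) < f := by
    intro n
    rw [nuP, sub_pos, div_lt_div_iff₀ (by positivity) hlam, hf, lt_sub_iff_add_lt,
      lt_div_iff₀ pi_pos]
    constructor
    · intro h; nlinarith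
    · intro h; nlinarith
  constructor
  · have hfneg : (-1 : ℝ) < f := by
      rw [hf]
      have : 0 < ξ / Real.pi := by positivity
      linarith
    have hfl : -1 ≤ ⌊f⌋ := by
      exact_mod_cast Int.le_floor.2 (by exact_mod_cast hfneg.le)
    have hm : 0 ≤ ⌊f⌋ + 1 := by omega
    set m : ℕ := (⌊f⌋ + 1).toNat with hm'
    have hset : {n : ℕ | 0 < nuP lam ξ n} = ↑(Finset.range m) := by
      ext n
      simp only [Set.mem_setOf_eq, Finset.coe_range, Set.mem_Iio, key n]
      constructor
      · intro h
        have h1 : (n : ℤ) ≤ ⌊f⌋ := Int.le_floor.2 (by exact_mod_cast h.le)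
        omega
      · intro h
        have h1 : (n : ℤ) ≤ ⌊f⌋ := by omega
        have h2 : (n : ℝ) ≤ f := by exact_mod_cast Int.le_floor.1 h1
        rcases lt_or_eq_of_le h2 with h3 | h3
        · exact h3
        · exact absurd h3.symm (hni n)
      
    rw [hset, Set.ncard_coe_finset, Finset.card_range]
    omega
  · intro n _
    have e : nuP lam ξ n = (2 * ξ - (2 * (n : ℝ) + 1) * Real.pi) / (2 * lam) := by
      rw [nuP]; field_simp
    rw [e, div_lt_iff₀ (by positivity)]
    have hn0 : (0 : ℝ) ≤ (n : ℝ) := n.cast_nonneg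
    nlinarith
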